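/- The two-dimensional Fourier transform of the spread payoff P(x1, x2) = max(e^{x1} − e^{x2} − 1, 0), computed along the shifted contour u = (u1 + iε1, u2 + iε2) with ε2 > 0 and ε1 + ε2 < −1, equals Γ(i(u1+u2) − 1) Γ(−i u2) / Γ(i u1 + 1), where Γ is the complex Gamma function. -/

import Mathlib

open Complex MeasureTheory Real Set Filter Topology

lemma expIntegrableOn (c : ℂ) (hc : c.re < 0) (L : ℝ) :
    IntegrableOn (fun x : ℝ => Complex.exp (c * x)) (Ioi L) := by
  apply Integrable.mono' (g := fun x => Real.exp (c.re * x))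
  · have : (0:ℝ) < -c.re := by linarith
    simpa [IntegrableOn] using exp_neg_integrableOn_Ioi L this
  · exact (Complex.continuous_exp.comp (by continuity)).aestronglyMeasurable.restrict
  · filter_upwards with x
    simp [Complex.norm_exp]

lemma expIntegral (c : ℂ) (hc : c.re < 0) (L : ℝ) :
    ∫ x in Ioi L, Complex.exp (c * x) = -Complex.exp (c * L) / c := by
  have hc0 : c ≠ 0 := by intro h; rw [h] at hc; simp at hc
  have h := integral_Ioi_of_hasDerivAt_of_tendsto (f := fun x : ℝ => Complex.exp (c * x) / c)
    (f' := fun x : ℝ => Complex.exp (c * x)) (a := L) (m := 0)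
    ?_ ?_ (expIntegrableOn c hc L) ?_
  · rw [h]; ring
  · exact ((Complex.continuous_exp.comp (by continuity)).div_const c).continuousWithinAt
  · intro x _
    have : HasDerivAt (fun x : ℝ => Complex.exp (c * x)) (Complex.exp (c * x) * c) x := by
      have h1 : HasDerivAt (fun x : ℝ => c * (x:ℂ)) c x := by
        simpa using (Complex.ofRealCLM.hasDerivAt (x := x)).const_mul c
      simpa using h1.cexp
    simpa [mul_div_assoc, mul_div_cancel_right₀ _ hc0] using this.div_const c
  · rw [tendsto_zero_iff_norm_tendsto_zero]
    have h1 : Tendsto (fun x : ℝ => Real.exp (c.re * x) / ‖c‖) atTop (𝓝 0) := by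
      have := (Real.tendsto_exp_atBot).comp (tendsto_id.const_mul_atTop_of_neg hc)
      simpa using this.div_const ‖c‖
    refine h1.congr fun x => ?_
    simp [Complex.norm_exp]

lemma innerFun_eq (c : ℂ) (A : ℝ) (hA : 1 ≤ A) :
    (fun x : ℝ => Complex.exp (c * x) * (max (Real.exp x - A) 0 : ℝ))
      = (Ioi (Real.log A)).indicator
          (fun x : ℝ => Complex.exp ((c+1) * x) - A * Complex.exp (c * x)) := by
  have hA0 : (0:ℝ) < A := lt_of_lt_of_le one_pos hA
  funext x
  by_cases hx : x ∈ Ioi (Real.log A)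
  · have hAx : A < Real.exp x := by
      have := Real.exp_lt_exp.mpr hx.out
      rwa [Real.exp_log hA0] at this
    rw [indicator_of_mem hx]
    have hmax : max (Real.exp x - A) 0 = Real.exp x - A := max_eq_left (by linarith)
    rw [hmax]
    push_cast
    rw [add_mul, one_mul, Complex.exp_add]
    ring
  · have hAx : Real.exp x ≤ A := by
      rw [← Real.exp_log hA0]
      exact Real.exp_le_exp.mpr (le_of_not_gt hx)
    rw [indicator_of_notMem hx]
    have hmax : max (Real.exp x - A) 0 = 0 := max_eq_right (by linarith)
    rw [hmax]
    simp

lemma innerIntegrable (c : ℂ) (hc : c.re < -1) (A : ℝ) (hA : 1 ≤ A) :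
    Integrable (fun x : ℝ => Complex.exp (c * x) * (max (Real.exp x - A) 0 : ℝ)) := by
  rw [innerFun_eq c A hA, integrable_indicator_iff measurableSet_Ioi]
  have h1 : IntegrableOn (fun x : ℝ => Complex.exp ((c+1) * x)) (Ioi (Real.log A)) :=
    expIntegrableOn (c+1) (by simp; linarith) _
  have h2 : IntegrableOn (fun x : ℝ => Complex.exp (c * x)) (Ioi (Real.log A)) :=
    expIntegrableOn c (by linarith) _
  exact h1.sub (h2.const_mul _)

lemma innerIntegral (c : ℂ) (hc : c.re < -1) (A : ℝ) (hA : 1 ≤ A) :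
    ∫ x : ℝ, Complex.exp (c * x) * (max (Real.exp x - A) 0 : ℝ)
      = Complex.exp ((c+1) * Real.log A) / (c * (c+1)) := by
  have hA0 : (0:ℝ) < A := lt_of_lt_of_le one_pos hA
  have hc0 : c ≠ 0 := fun h => by rw [h] at hc; norm_num at hc
  have hc1 : c + 1 ≠ 0 := fun h => by
    have := congrArg Complex.re h; simp at this; linarith
  rw [innerFun_eq c A hA, integral_indicator measurableSet_Ioi]
  have h1 : IntegrableOn (fun x : ℝ => Complex.exp ((c+1) * x)) (Ioi (Real.log A)) :=
    expIntegrableOn (c+1) (by simp; linarith) _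
  have h2 : IntegrableOn (fun x : ℝ => A * Complex.exp (c * x)) (Ioi (Real.log A)) :=
    (expIntegrableOn c (by linarith) _).const_mul _
  rw [integral_sub h1 h2, integral_const_mul, expIntegral (c+1) (by simp; linarith),
    expIntegral c (by linarith)]
  have hAexp : (A : ℂ) = Complex.exp (Real.log A) := by
    rw [← Complex.ofReal_exp, Real.exp_log hA0]
  have key : Complex.exp ((c+1) * (Real.log A : ℂ)) = A * Complex.exp (c * Real.log A) := by
    rw [add_mul, one_mul, Complex.exp_add, hAexp]; ring
  rw [key]
  field_simp
  ring

lemma betaIoi (s t : ℂ) (hs : 0 < s.re) (ht : 0 < t.re) :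
    ∫ v in Ioi (0:ℝ), (v:ℂ)^(s-1) * (((1+v : ℝ)):ℂ)^(-(s+t))
      = Complex.Gamma s * Complex.Gamma t / Complex.Gamma (s+t) := by
  set g : ℝ → ℂ := fun v => (v:ℂ)^(s-1) * (((1+v : ℝ)):ℂ)^(-(s+t)) with hg
  have himg : (fun x : ℝ => x / (1-x)) '' Ioo 0 1 = Ioi (0:ℝ) := by
    ext v
    constructor
    · rintro ⟨x, ⟨hx0, hx1⟩, rfl⟩
      exact div_pos hx0 (by linarith)
    · intro hv
      refine ⟨v / (1+v), ⟨div_pos hv (by linarith [hv.out]), ?_⟩, ?_⟩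
      · rw [div_lt_one (by linarith [hv.out])]; linarith [hv.out]
      · have h1 : (0:ℝ) < 1 + v := by linarith [hv.out]
        field_simp
        ring
  have hderiv : ∀ x ∈ Ioo (0:ℝ) 1,
      HasDerivWithinAt (fun x : ℝ => x / (1-x)) (((1-x)^2)⁻¹) (Ioo 0 1) x := by
    intro x hx
    have hne : (1 - x) ≠ 0 := sub_ne_zero.mpr (ne_of_gt hx.2)
    have : HasDerivAt (fun x : ℝ => x / (1-x)) ((1*(1-x) - x*(-1))/(1-x)^2) x :=
      (hasDerivAt_id x).div ((hasDerivAt_id x).const_sub 1) hne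
    convert this.hasDerivWithinAt using 1
    · rfl
    · rfl
    simp only [show (1*(1-x) - x*(-1)) = (1:ℝ) by ring, one_div]
  have hinj : InjOn (fun x : ℝ => x / (1-x)) (Ioo 0 1) := by
    intro x hx y hy h
    have hnx : (1 - x) ≠ 0 := by have := hx.2; intro h'; linarith [(by linarith : x = 1)]
    have hny : (1 - y) ≠ 0 := by have := hy.2; intro h'; linarith [(by linarith : y = 1)]
    field_simp at h
    nlinarith [h]
  have step1 : ∫ v in Ioi (0:ℝ), g v
      = ∫ x in Ioo (0:ℝ) 1, |((1-x)^2)⁻¹| • g (x / (1-x)) := by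
    rw [← himg]
    exact integral_image_eq_integral_abs_deriv_smul measurableSet_Ioo hderiv hinj g
  have step2 : ∫ x in Ioo (0:ℝ) 1, |((1-x)^2)⁻¹| • g (x / (1-x))
      = ∫ x in Ioo (0:ℝ) 1, (x:ℂ)^(s-1) * (((1-x:ℝ)):ℂ)^(t-1) := by
    refine setIntegral_congr_fun measurableSet_Ioo (fun x hx => ?_)
    obtain ⟨hx0, hx1⟩ := hx
    have hb : (0:ℝ) < 1 - x := by linarith
    have hbne : ((1-x:ℝ):ℂ) ≠ 0 := by
      simp only [ne_eq, Complex.ofReal_eq_zero]; linarith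
    have harg : ((1-x:ℝ):ℂ).arg ≠ π := by
      rw [Complex.arg_ofReal_of_nonneg hb.le]; exact Real.pi_ne_zero.symm
    have e1 : ((x / (1-x) : ℝ):ℂ)^(s-1) = (x:ℂ)^(s-1) * (((1-x:ℝ)):ℂ)^(-(s-1)) := by
      rw [div_eq_mul_inv, Complex.ofReal_mul,
        Complex.mul_cpow_ofReal_nonneg hx0.le (inv_nonneg.mpr hb.le),
        Complex.ofReal_inv, Complex.inv_cpow _ _ harg, ← Complex.cpow_neg]
    have e2 : ((1 + x / (1-x) : ℝ):ℂ)^(-(s+t)) = (((1-x:ℝ)):ℂ)^(s+t) := by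
      have : (1 + x / (1-x) : ℝ) = (1-x)⁻¹ := by field_simp; ring
      rw [this, Complex.ofReal_inv, Complex.inv_cpow _ _ harg, ← Complex.cpow_neg, neg_neg]
    rw [hg]
    simp only [real_smul]
    rw [abs_of_pos (show (0:ℝ) < ((1-x)^2)⁻¹ by positivity), Complex.ofReal_inv,
      Complex.ofReal_pow, e1, e2]
    have e4 : (((1-x:ℝ)):ℂ)^(-(s-1)) * (((1-x:ℝ)):ℂ)^(s+t) * ((((1-x:ℝ)):ℂ)^(2:ℕ))⁻¹
        = (((1-x:ℝ)):ℂ)^(t-1) := by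
      rw [← Complex.cpow_natCast ((1-x:ℝ):ℂ) 2, ← Complex.cpow_neg,
        ← Complex.cpow_add _ _ hbne, ← Complex.cpow_add _ _ hbne]
      congr 1
      push_cast
      ring
    rw [← e4]
    ring
  have step3 : ∫ x in Ioo (0:ℝ) 1, (x:ℂ)^(s-1) * (((1-x:ℝ)):ℂ)^(t-1)
      = Complex.betaIntegral s t := by
    rw [Complex.betaIntegral, intervalIntegral.integral_of_le zero_le_one,
      integral_Ioc_eq_integral_Ioo]
    refine setIntegral_congr_fun measurableSet_Ioo (fun x _ => ?_)
    norm_cast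
  rw [step1, step2, step3]
  rw [eq_div_iff (Complex.Gamma_ne_zero_of_re_pos (by simp; linarith))]
  rw [Complex.Gamma_mul_Gamma_eq_betaIntegral hs ht]
  ring

lemma integral_eq_log_sub (F : ℝ → ℂ) :
    ∫ x : ℝ, F x = ∫ v in Ioi (0:ℝ), |v⁻¹| • F (Real.log v) := by
  have himg : Real.log '' Ioi 0 = (univ : Set ℝ) := by
    ext y
    simp only [mem_image, mem_Ioi, mem_univ, iff_true]
    exact ⟨Real.exp y, Real.exp_pos y, Real.log_exp y⟩
  have hderiv : ∀ v ∈ Ioi (0:ℝ), HasDerivWithinAt Real.log v⁻¹ (Ioi 0) v :=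
    fun v hv => (Real.hasDerivAt_log (ne_of_gt hv)).hasDerivWithinAt
  rw [← setIntegral_univ, ← himg,
    integral_image_eq_integral_abs_deriv_smul measurableSet_Ioi hderiv Real.log_injOn_pos F]

lemma expMulIntegrableOn_Iic {b : ℝ} (hb : 0 < b) :
    IntegrableOn (fun x : ℝ => Real.exp (b*x)) (Iic 0) := by
  refine (integrable_indicator_iff measurableSet_Iic).mp ?_
  have h : (Iic (0:ℝ)).indicator (fun x => Real.exp (b*x))
      = fun x => ((Iic (0:ℝ)).indicator Real.exp) (b*x) := by
    funext x
    have hiff : b * x ≤ 0 ↔ x ≤ 0 := by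
      constructor <;> intro h <;> nlinarith
    by_cases hx : x ≤ 0
    · simp [indicator, hx, hiff.mpr hx]
    · rw [indicator_of_notMem (by simpa using hx), indicator_of_notMem (by simpa using fun h => hx (hiff.mp h))]
  rw [h]
  exact (integrable_comp_mul_left_iff _ hb.ne').mpr
    ((integrable_indicator_iff measurableSet_Iic).mpr (integrableOn_exp_Iic 0))

lemma innerIntegralReal {a : ℝ} (ha : a < -1) {A : ℝ} (hA : 1 ≤ A) :
    ∫ x : ℝ, Real.exp (a*x) * max (Real.exp x - A) 0
      = Real.exp ((a+1)*Real.log A) / (a*(a+1)) := by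
  have h := innerIntegral (a:ℂ) (by simpa using ha) A hA
  have e1 : (fun x : ℝ => Complex.exp ((a:ℂ) * x) * ((max (Real.exp x - A) 0 : ℝ) : ℂ))
      = fun x : ℝ => ((Real.exp (a*x) * max (Real.exp x - A) 0 : ℝ) : ℂ) := by
    funext x
    push_cast [← Complex.ofReal_exp]
    norm_cast
  have e2 : Complex.exp (((a:ℂ)+1) * (Real.log A : ℂ)) / ((a:ℂ) * ((a:ℂ)+1))
      = ((Real.exp ((a+1)*Real.log A) / (a*(a+1)) : ℝ) : ℂ) := by
    push_cast [← Complex.ofReal_exp]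
    norm_cast
  rw [e1, e2] at h
  have h3 : (∫ x : ℝ, ((Real.exp (a*x) * max (Real.exp x - A) 0 : ℝ) : ℂ))
      = ((∫ x : ℝ, Real.exp (a*x) * max (Real.exp x - A) 0 : ℝ) : ℂ) := integral_ofReal
  rw [h3] at h
  exact_mod_cast h

theorem main_aux (c1 c2 : ℂ) (h1 : c1.re < -1) (h2 : 0 < c2.re) (h12 : c1.re + c2.re < -1) :
    (∫ x : ℝ × ℝ,
        Complex.exp (c1 * x.1 + c2 * x.2) * (max (Real.exp x.1 - Real.exp x.2 - 1) 0 : ℝ))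
      = Complex.Gamma (-1 - c1 - c2) * Complex.Gamma c2 / Complex.Gamma (1 - c1) := by
  set f : ℝ × ℝ → ℂ := fun p =>
    Complex.exp (c1 * p.1 + c2 * p.2) * (max (Real.exp p.1 - Real.exp p.2 - 1) 0 : ℝ) with hf
  have hc1ne : c1 ≠ 0 := fun h => by rw [h] at h1; norm_num at h1
  have hc11ne : c1 + 1 ≠ 0 := fun h => by
    have := congrArg Complex.re h; simp at this; linarith
  -- continuity
  have hcont : Continuous f := by
    apply Continuous.mul
    · exact Complex.continuous_exp.comp (by fun_prop)
    · exact Complex.continuous_ofReal.comp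
        (Continuous.max (by fun_prop) continuous_const)
  -- payoff rewrite
  have hpay : ∀ x y : ℝ, max (Real.exp x - Real.exp y - 1) 0
      = max (Real.exp x - (1 + Real.exp y)) 0 := by
    intro x y; congr 1; ring
  have hA : ∀ y : ℝ, (1:ℝ) ≤ 1 + Real.exp y := fun y => by
    have := Real.exp_pos y; linarith
  -- inner integrability
  have hInner : ∀ y : ℝ, Integrable (fun x => f (x, y)) := by
    intro y
    have h := (innerIntegrable c1 h1 (1 + Real.exp y) (hA y)).const_mul (Complex.exp (c2 * y))
    refine h.congr (Eventually.of_forall fun x => ?_)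
    simp only [hf, hpay x y]
    rw [Complex.exp_add]
    ring
  -- norm formula
  have hnorm : ∀ x y : ℝ, ‖f (x, y)‖
      = Real.exp (c1.re * x) * max (Real.exp x - (1 + Real.exp y)) 0 * Real.exp (c2.re * y) := by
    intro x y
    simp only [hf, norm_mul, Complex.norm_exp, Complex.norm_real, Real.norm_eq_abs,
      abs_of_nonneg (le_max_right (Real.exp x - (1 + Real.exp y)) 0), hpay x y]
    have : (c1 * (x:ℂ) + c2 * (y:ℂ)).re = c1.re * x + c2.re * y := by
      simp [Complex.add_re, Complex.mul_re]
    rw [this, Real.exp_add]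
    ring
  -- value of inner norm integral
  have hnormint : ∀ y : ℝ, (∫ x, ‖f (x, y)‖)
      = Real.exp ((c1.re+1) * Real.log (1 + Real.exp y)) / (c1.re * (c1.re+1))
          * Real.exp (c2.re * y) := by
    intro y
    simp_rw [hnorm]
    rw [integral_mul_const, innerIntegralReal h1 (hA y)]
  -- integrability of the norm-integral function
  have hb : 0 < c2.re := h2
  have hr0 : Integrable (fun y : ℝ =>
      Real.exp ((c1.re+1) * Real.log (1 + Real.exp y)) * Real.exp (c2.re * y)) := by
    set G : ℝ → ℝ := fun y => (Iic (0:ℝ)).indicator (fun x => Real.exp (c2.re * x)) y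
      + (Ioi (0:ℝ)).indicator (fun x => Real.exp ((c1.re + c2.re + 1) * x)) y with hG
    have hGint : Integrable G := by
      apply Integrable.add
      · exact (integrable_indicator_iff measurableSet_Iic).mpr (expMulIntegrableOn_Iic h2)
      · refine (integrable_indicator_iff measurableSet_Ioi).mpr ?_
        have h := exp_neg_integrableOn_Ioi (0:ℝ)
          (show 0 < -(c1.re + c2.re + 1) by linarith)
        simpa using h
    refine Integrable.mono' hGint ?_ (Eventually.of_forall fun y => ?_)
    · have hcont0 : Continuous fun y : ℝ => Real.log (1 + Real.exp y) :=
        (continuous_const.add Real.continuous_exp).log (fun y => (by positivity : (0:ℝ) < 1 + Real.exp y).ne')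
      exact ((Real.continuous_exp.comp (continuous_const.mul hcont0)).mul
        (Real.continuous_exp.comp (by fun_prop))).aestronglyMeasurable
    · have hlog0 : 0 ≤ Real.log (1 + Real.exp y) :=
        Real.log_nonneg (hA y)
      have hexp1 : 0 < Real.exp ((c1.re+1) * Real.log (1 + Real.exp y)) := Real.exp_pos _
      rw [Real.norm_eq_abs, _root_.abs_of_nonneg (by positivity)]
      by_cases hy : y ≤ 0
      · have hG1 : G y = Real.exp (c2.re * y) := by
          simp only [hG]
          have hm1 : y ∈ Iic (0:ℝ) := hy
          have hm2 : y ∉ Ioi (0:ℝ) := by simp only [mem_Ioi, not_lt]; exact hy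
          rw [indicator_of_mem hm1, indicator_of_notMem hm2, add_zero]
        rw [hG1]
        have : Real.exp ((c1.re+1) * Real.log (1 + Real.exp y)) ≤ 1 := by
          rw [Real.exp_le_one_iff]
          exact mul_nonpos_of_nonpos_of_nonneg (by linarith) hlog0
        nlinarith [Real.exp_pos (c2.re * y)]
      · push_neg at hy
        have hG1 : G y = Real.exp ((c1.re + c2.re + 1) * y) := by
          simp only [hG]
          have hm1 : y ∉ Iic (0:ℝ) := by simp only [mem_Iic, not_le]; exact hy
          have hm2 : y ∈ Ioi (0:ℝ) := hy
          rw [indicator_of_notMem hm1, indicator_of_mem hm2, zero_add]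
        rw [hG1]
        have hle : y ≤ Real.log (1 + Real.exp y) := by
          have := Real.log_le_log (Real.exp_pos y) (show Real.exp y ≤ 1 + Real.exp y by linarith)
          rwa [Real.log_exp] at this
        have h2' : (c1.re+1) * Real.log (1 + Real.exp y) ≤ (c1.re+1) * y :=
          mul_le_mul_of_nonpos_left hle (by linarith)
        have := Real.exp_le_exp.mpr h2'
        calc Real.exp ((c1.re+1) * Real.log (1 + Real.exp y)) * Real.exp (c2.re * y)
            ≤ Real.exp ((c1.re+1) * y) * Real.exp (c2.re * y) := by
              apply mul_le_mul_of_nonneg_right this (Real.exp_pos _).le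
          _ = Real.exp ((c1.re + c2.re + 1) * y) := by rw [← Real.exp_add]; ring_nf
  -- integrability on the product
  have hint : Integrable f (volume.prod volume) := by
    refine (integrable_prod_iff' hcont.aestronglyMeasurable).mpr ⟨?_, ?_⟩
    · exact Eventually.of_forall hInner
    · have heq : (fun y : ℝ => ∫ x, ‖f (x, y)‖)
          = fun y => Real.exp ((c1.re+1) * Real.log (1 + Real.exp y)) / (c1.re * (c1.re+1))
              * Real.exp (c2.re * y) := funext hnormint
      rw [heq]
      simp_rw [div_mul_eq_mul_div]
      exact hr0.div_const _
  -- Fubini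
  rw [Measure.volume_eq_prod, integral_prod_symm f hint]
  -- inner integral
  have hinner : ∀ y : ℝ, (∫ x, f (x, y))
      = Complex.exp (c2 * y) *
        (Complex.exp ((c1+1) * Real.log (1 + Real.exp y)) / (c1 * (c1+1))) := by
    intro y
    have e : (fun x : ℝ => f (x, y)) = fun x : ℝ =>
        Complex.exp (c2 * y) * (Complex.exp (c1 * x) * (max (Real.exp x - (1 + Real.exp y)) 0 : ℝ)) := by
      funext x
      simp only [hf, hpay x y]
      rw [Complex.exp_add]
      ring
    rw [e, integral_const_mul, innerIntegral c1 h1 (1 + Real.exp y) (hA y)]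
  simp_rw [hinner, ← mul_div_assoc]
  rw [integral_div, integral_eq_log_sub
    (fun y : ℝ => Complex.exp (c2 * y) * Complex.exp ((c1+1) * (Real.log (1 + Real.exp y) : ℝ)))]
  have hstep : ∫ v in Ioi (0:ℝ), |v⁻¹| • (Complex.exp (c2 * (Real.log v : ℝ))
        * Complex.exp ((c1+1) * (Real.log (1 + Real.exp (Real.log v)) : ℝ)))
      = ∫ v in Ioi (0:ℝ), (v:ℂ)^(c2-1) * (((1+v : ℝ)):ℂ)^(-(c2 + (-1 - c1 - c2))) := by
    refine setIntegral_congr_fun measurableSet_Ioi (fun v hv => ?_)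
    have hv0 : (0:ℝ) < v := hv
    have hv1 : (0:ℝ) < 1 + v := by linarith
    have hvne : ((v:ℝ):ℂ) ≠ 0 := by exact_mod_cast hv0.ne'
    have hv1ne : ((1+v:ℝ):ℂ) ≠ 0 := by exact_mod_cast hv1.ne'
    rw [Real.exp_log hv0]
    have l1 : (v:ℂ)^(c2-1) = Complex.exp ((Real.log v : ℂ) * (c2-1)) := by
      rw [Complex.cpow_def_of_ne_zero hvne, Complex.ofReal_log hv0.le]
    have l2 : (((1+v : ℝ)):ℂ)^(c1+1) = Complex.exp ((Real.log (1+v) : ℂ) * (c1+1)) := by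
      rw [Complex.cpow_def_of_ne_zero hv1ne, Complex.ofReal_log hv1.le]
    have l3 : Complex.exp ((Real.log v : ℂ) * (c2-1))
        = ((v:ℂ))⁻¹ * Complex.exp (c2 * (Real.log v : ℝ)) := by
      rw [show ((Real.log v : ℝ) : ℂ) * (c2-1)
          = c2 * (Real.log v : ℝ) - (Real.log v : ℝ) by ring, Complex.exp_sub,
        ← Complex.ofReal_exp, Real.exp_log hv0, div_eq_mul_inv]
      ring
    rw [show -(c2 + (-1 - c1 - c2)) = c1 + 1 by ring, l1, l2, l3]
    rw [real_smul, show |v⁻¹| = v⁻¹ from _root_.abs_of_pos (by positivity),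
      Complex.ofReal_inv]
    rw [mul_comm c2 ((Real.log v : ℝ) : ℂ), mul_comm ((Real.log (1+v) : ℝ) : ℂ) (c1+1)]
    ring
  rw [hstep, betaIoi c2 (-1 - c1 - c2) h2 (by simp; linarith)]
  rw [show c2 + (-1 - c1 - c2) = -1 - c1 by ring]
  -- Gamma algebra
  have hGne : Complex.Gamma (-1 - c1) ≠ 0 :=
    Complex.Gamma_ne_zero_of_re_pos (by simp; linarith)
  have hne1 : (-1 - c1 : ℂ) ≠ 0 := fun h => by
    have := congrArg Complex.re h; simp at this; linarith
  have g1 : Complex.Gamma (-c1) = (-1 - c1) * Complex.Gamma (-1 - c1) := by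
    have := Complex.Gamma_add_one (-1 - c1) hne1
    rwa [show (-1 - c1 + 1 : ℂ) = -c1 by ring] at this
  have g2 : Complex.Gamma (1 - c1) = (-c1) * Complex.Gamma (-c1) := by
    have := Complex.Gamma_add_one (-c1) (neg_ne_zero.mpr hc1ne)
    rwa [show (-c1 + 1 : ℂ) = 1 - c1 by ring] at this
  rw [g2, g1]
  field_simp
  ring

/-- The two-dimensional Fourier transform of the spread payoff
`P(x1,x2) = (e^{x1} − e^{x2} − 1)_+` along the shifted contour
`(u1 + iε1, u2 + iε2)` with ε2 > 0 and ε1 + ε2 < −1 equals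
`Γ(i(z1+z2) − 1) Γ(−i z2) / Γ(i z1 + 1)` where z = u + iε. -/
theorem spread_payoff_fourier_transform (u1 u2 ε1 ε2 : ℝ)
    (hε2 : 0 < ε2) (hε : ε1 + ε2 < -1) :
    (∫ x : ℝ × ℝ,
        Complex.exp (-Complex.I * (((u1 : ℂ) + Complex.I * ε1) * (x.1 : ℂ)
            + ((u2 : ℂ) + Complex.I * ε2) * (x.2 : ℂ)))
          * (max (Real.exp x.1 - Real.exp x.2 - 1) 0 : ℝ))
      = Complex.Gamma (Complex.I * (((u1 : ℂ) + Complex.I * ε1) + ((u2 : ℂ) + Complex.I * ε2)) - 1)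
          * Complex.Gamma (-Complex.I * ((u2 : ℂ) + Complex.I * ε2))
          / Complex.Gamma (Complex.I * ((u1 : ℂ) + Complex.I * ε1) + 1) := by
  have h1 : (-Complex.I * ((u1 : ℂ) + Complex.I * ε1)).re < -1 := by simp; linarith
  have h2 : 0 < (-Complex.I * ((u2 : ℂ) + Complex.I * ε2)).re := by simp; linarith
  have h12 : (-Complex.I * ((u1 : ℂ) + Complex.I * ε1)).re
      + (-Complex.I * ((u2 : ℂ) + Complex.I * ε2)).re < -1 := by simp; linarith
  have heq : (fun x : ℝ × ℝ =>
        Complex.exp (-Complex.I * (((u1 : ℂ) + Complex.I * ε1) * (x.1 : ℂ)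
            + ((u2 : ℂ) + Complex.I * ε2) * (x.2 : ℂ)))
          * (max (Real.exp x.1 - Real.exp x.2 - 1) 0 : ℝ))
      = fun x : ℝ × ℝ =>
        Complex.exp ((-Complex.I * ((u1 : ℂ) + Complex.I * ε1)) * (x.1 : ℂ)
            + (-Complex.I * ((u2 : ℂ) + Complex.I * ε2)) * (x.2 : ℂ))
          * (max (Real.exp x.1 - Real.exp x.2 - 1) 0 : ℝ) := by
    funext x
    congr 2
    ring
  rw [heq, main_aux _ _ h1 h2 h12,
    show (-1 : ℂ) - -Complex.I * ((u1 : ℂ) + Complex.I * ε1) - -Complex.I * ((u2 : ℂ) + Complex.I * ε2)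
      = Complex.I * (((u1 : ℂ) + Complex.I * ε1) + ((u2 : ℂ) + Complex.I * ε2)) - 1 from by ring,
    show (1 : ℂ) - -Complex.I * ((u1 : ℂ) + Complex.I * ε1)
      = Complex.I * ((u1 : ℂ) + Complex.I * ε1) + 1 from by ring]
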